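/- Let Y be a topological space, n ≥ 1, and let U₁, U₂, U₃ : Y → M_n(ℂ) be continuous mappings such that for every y ∈ Y the matrices U₁(y) and U₃(y) are upper unitriangular and U₂(y) is lower unitriangular. Then there exist continuous mappings A, B : Y → M_n(ℂ) with A(y) and B(y) nilpotent for every y, such that U₁(y)·U₂(y)·U₃(y) = exp(A(y))·exp(B(y)) for all y ∈ Y. -/

import Mathlib

/-- `M` is lower unitriangular. -/
def IsLowerUnitriangular {m : ℕ} (M : Matrix (Fin m) (Fin m) ℂ) : Prop :=
  (∀ i, M i i = 1) ∧ ∀ i j : Fin m, i < j → M i j = 0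

/-- `M` is upper unitriangular. -/
def IsUpperUnitriangular {m : ℕ} (M : Matrix (Fin m) (Fin m) ℂ) : Prop :=
  (∀ i, M i i = 1) ∧ ∀ i j : Fin m, j < i → M i j = 0

/-! ### Auxiliary polynomial lemmas: the truncated logarithm -/

/-- The truncated logarithm series `log(1+X)`, up to degree `m-1`. -/
noncomputable def Lp (m : ℕ) : Polynomial ℂ :=
  ∑ k ∈ Finset.Ico 1 m, Polynomial.C ((-1 : ℂ)^(k+1) / k) * Polynomial.X^k

/-- The truncated exponential of the truncated logarithm. -/
noncomputable def Fp (m : ℕ) : Polynomial ℂ :=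
  ∑ j ∈ Finset.range (m+1), Polynomial.C ((j.factorial : ℂ)⁻¹) * (Lp m)^j

lemma X_dvd_Lp (m : ℕ) : Polynomial.X ∣ Lp m := by
  apply Finset.dvd_sum
  intro k hk
  simp only [Finset.mem_Ico] at hk
  exact Dvd.dvd.mul_left (dvd_pow_self _ (by omega)) _

lemma deriv_Lp (m : ℕ) :
    Polynomial.derivative (Lp m) = ∑ k ∈ Finset.range (m-1), (-Polynomial.X)^k := by
  rw [Lp, map_sum, Finset.sum_Ico_eq_sum_range]
  apply Finset.sum_congr rfl
  intro k _
  rw [Polynomial.derivative_C_mul, Polynomial.derivative_X_pow]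
  have h1 : (1 + k - 1) = k := by omega
  rw [h1, ← mul_assoc, ← Polynomial.C_mul]
  have h2 : ((-1 : ℂ)^(1+k+1) / ((1+k : ℕ):ℂ) * ((1+k : ℕ):ℂ)) = (-1)^k := by
    have h3 : ((1+k : ℕ):ℂ) ≠ 0 := Nat.cast_ne_zero.mpr (by omega)
    rw [div_mul_cancel₀ _ h3, show 1+k+1 = k+2 by omega, pow_add]
    norm_num
  rw [h2]
  rw [neg_pow (Polynomial.X : Polynomial ℂ) k, ← Polynomial.C_1, ← Polynomial.C_neg,
    ← Polynomial.C_pow]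

lemma geom_Lp (m : ℕ) :
    (1 + Polynomial.X) * Polynomial.derivative (Lp m)
      = 1 - (-Polynomial.X)^(m-1) := by
  rw [deriv_Lp]
  have := geom_sum_mul (-Polynomial.X : Polynomial ℂ) (m-1)
  linear_combination -this

lemma deriv_Fp (m : ℕ) :
    Polynomial.derivative (Fp m)
      = Polynomial.derivative (Lp m) *
        (Fp m - Polynomial.C ((m.factorial : ℂ)⁻¹) * (Lp m)^m) := by
  have key : Polynomial.derivative (Fp m)
      = ∑ j ∈ Finset.range m,
          Polynomial.C ((j.factorial : ℂ)⁻¹) * (Lp m)^j * Polynomial.derivative (Lp m) := by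
    rw [Fp, map_sum, Finset.sum_range_succ']
    simp only [Polynomial.derivative_C_mul, Polynomial.derivative_pow]
    simp only [pow_zero, Polynomial.derivative_one, Nat.cast_zero, mul_zero, zero_mul,
      Nat.factorial_zero, add_zero, Nat.cast_one, map_zero]
    apply Finset.sum_congr rfl
    intro j _
    rw [Nat.add_sub_cancel, ← mul_assoc, ← mul_assoc, ← Polynomial.C_mul]
    congr 2
    rw [Nat.factorial_succ]
    have h1 : (j.factorial : ℂ) ≠ 0 := Nat.cast_ne_zero.mpr j.factorial_ne_zero
    have h2 : ((j+1 : ℕ) : ℂ) ≠ 0 := Nat.cast_ne_zero.mpr (by omega)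
    push_cast at h1 h2 ⊢
    field_simp
  rw [key]
  have : Fp m - Polynomial.C ((m.factorial : ℂ)⁻¹) * (Lp m)^m
      = ∑ j ∈ Finset.range m, Polynomial.C ((j.factorial : ℂ)⁻¹) * (Lp m)^j := by
    rw [Fp, Finset.sum_range_succ]
    ring
  rw [this, Finset.mul_sum]
  apply Finset.sum_congr rfl
  intro j _
  ring

lemma dvd_D (m : ℕ) :
    Polynomial.X^(m-1) ∣
      (1 + Polynomial.X) * Polynomial.derivative (Fp m - (1 + Polynomial.X))
        - (Fp m - (1 + Polynomial.X)) := by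
  set y : Polynomial ℂ := (-Polynomial.X)^(m-1) with hy
  set z : Polynomial ℂ := Polynomial.C ((m.factorial : ℂ)⁻¹) * (Lp m)^m with hz
  have e1 : (1 + Polynomial.X) * Polynomial.derivative (Fp m) = (1 - y) * (Fp m - z) := by
    rw [deriv_Fp, ← mul_assoc, geom_Lp]
  have e2 : (1 + Polynomial.X) * Polynomial.derivative (Fp m - (1 + Polynomial.X))
        - (Fp m - (1 + Polynomial.X)) = y * (z - Fp m) - z := by
    have : Polynomial.derivative (Fp m - (1 + Polynomial.X))
        = Polynomial.derivative (Fp m) - 1 := by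
      simp [Polynomial.derivative_add]
    rw [this, mul_sub, e1]
    ring
  rw [e2]
  have hyd : Polynomial.X^(m-1) ∣ y := by
    rw [hy, neg_pow]
    exact Dvd.dvd.mul_left dvd_rfl _
  have hzd : Polynomial.X^(m-1) ∣ z := by
    refine dvd_trans (pow_dvd_pow _ (Nat.sub_le m 1)) ?_
    exact Dvd.dvd.mul_left (pow_dvd_pow_of_dvd (X_dvd_Lp m) m) _
  exact dvd_sub (hyd.mul_right _) hzd

lemma coeff_rec (G : Polynomial ℂ) (m : ℕ) (h0 : G.coeff 0 = 0)
    (hd : Polynomial.X^(m-1) ∣ (1 + Polynomial.X) * Polynomial.derivative G - G) :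
    Polynomial.X^m ∣ G := by
  rw [Polynomial.X_pow_dvd_iff]
  intro d hdm
  induction d with
  | zero => exact h0
  | succ i ih =>
    have hi : G.coeff i = 0 := ih (by omega)
    have hD : ((1 + Polynomial.X) * Polynomial.derivative G - G).coeff i = 0 :=
      Polynomial.X_pow_dvd_iff.mp hd i (by omega)
    have hXmul : (Polynomial.X * Polynomial.derivative G).coeff i = 0 := by
      cases i with
      | zero => simp
      | succ j =>
        rw [Polynomial.coeff_X_mul, Polynomial.coeff_derivative, hi]
        simp
    rw [Polynomial.coeff_sub, add_mul, one_mul, Polynomial.coeff_add, hXmul,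
      Polynomial.coeff_derivative, hi] at hD
    have hne : ((i : ℂ) + 1) ≠ 0 := by
      have : ((i+1 : ℕ) : ℂ) ≠ 0 := Nat.cast_ne_zero.mpr (by omega)
      push_cast at this
      exact this
    have hprod : G.coeff (i+1) * ((i : ℂ) + 1) = 0 := by linear_combination hD
    rcases mul_eq_zero.mp hprod with h | h
    · exact h
    · exact absurd h hne

/-- The key polynomial identity: `exp(log(1+X)) ≡ 1 + X mod X^m`. -/
lemma Fp_sub_dvd (m : ℕ) : Polynomial.X^m ∣ Fp m - (1 + Polynomial.X) := by
  apply coeff_rec _ m _ (dvd_D m)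
  rw [Polynomial.coeff_sub, Polynomial.coeff_zero_eq_eval_zero, Polynomial.coeff_zero_eq_eval_zero]
  obtain ⟨q, hq⟩ := X_dvd_Lp m
  rw [Fp]
  simp only [Polynomial.eval_finset_sum, Polynomial.eval_mul, Polynomial.eval_C,
    Polynomial.eval_pow, hq, Polynomial.eval_mul, Polynomial.eval_X, zero_mul]
  rw [Finset.sum_eq_single 0]
  · simp
  · intro j _ hj
    rw [zero_pow hj, mul_zero]
  · simp

/-! ### Matrix lemmas -/

open Matrix in

lemma Lp_nilpotent {n : ℕ} (m : ℕ) (x : Matrix (Fin n) (Fin n) ℂ) (hx : x ^ m = 0) :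
    (Polynomial.aeval x (Lp m)) ^ m = 0 := by
  obtain ⟨q, hq⟩ := X_dvd_Lp m
  have hcomm : Commute x (Polynomial.aeval x q) := by
    simpa using (Commute.all Polynomial.X q).map (Polynomial.aeval x)
  rw [hq, _root_.map_mul, Polynomial.aeval_X, hcomm.mul_pow, hx, zero_mul]

lemma exp_aeval_Lp {n : ℕ} (m : ℕ) (x : Matrix (Fin n) (Fin n) ℂ) (hx : x ^ m = 0) :
    NormedSpace.exp (Polynomial.aeval x (Lp m)) = 1 + x := by
  set l := Polynomial.aeval x (Lp m) with hl
  have hln : l ^ m = 0 := Lp_nilpotent m x hx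
  have hexp : NormedSpace.exp l
      = ∑ j ∈ Finset.range (m+1), ((j.factorial : ℂ))⁻¹ • l ^ j := by
    rw [NormedSpace.exp_eq_tsum (𝕂 := ℂ)]
    apply tsum_eq_sum
    intro j hj
    have hjm : m ≤ j := by
      simp only [Finset.mem_range] at hj; omega
    have : l ^ j = 0 := by
      rw [show j = m + (j - m) by omega, pow_add, hln, zero_mul]
    rw [this, smul_zero]
  have haeval : Polynomial.aeval x (Fp m)
      = ∑ j ∈ Finset.range (m+1), ((j.factorial : ℂ))⁻¹ • l ^ j := by
    rw [Fp, map_sum]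
    apply Finset.sum_congr rfl
    intro j _
    rw [map_mul, map_pow, Polynomial.aeval_C, Algebra.smul_def]
  obtain ⟨h, hh⟩ := Fp_sub_dvd m
  have : Polynomial.aeval x (Fp m) = 1 + x := by
    have := congrArg (Polynomial.aeval x) hh
    rw [map_sub, map_mul, map_pow, Polynomial.aeval_X, hx, zero_mul, sub_eq_zero] at this
    rw [this, map_add, map_one, Polynomial.aeval_X]
  rw [hexp, ← haeval, this]

/-- strictly lower triangular matrices are nilpotent -/
lemma strict_pow_zero {n : ℕ} (M : Matrix (Fin n) (Fin n) ℂ)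
    (hM : ∀ i j : Fin n, i ≤ j → M i j = 0) : M ^ n = 0 := by
  have key : ∀ k : ℕ, ∀ i j : Fin n, (i : ℕ) < (j : ℕ) + k → (M ^ k) i j = 0 := by
    intro k
    induction k with
    | zero =>
      intro i j hij
      simp only [pow_zero]
      rw [Matrix.one_apply_ne]
      intro h
      rw [h] at hij
      omega
    | succ k ih =>
      intro i j hij
      rw [pow_succ', Matrix.mul_apply]
      apply Finset.sum_eq_zero
      intro l _
      by_cases hl : (l : ℕ) < (j : ℕ) + k
      · rw [ih l j hl, mul_zero]
      · have : M i l = 0 := by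
          apply hM
          have : (i : ℕ) ≤ (l : ℕ) := by omega
          exact Fin.le_def.mpr this
        rw [this, zero_mul]
  ext i j
  rw [key n i j (by omega)]
  simp

lemma strict_upper_pow_zero {n : ℕ} (M : Matrix (Fin n) (Fin n) ℂ)
    (hM : ∀ i j : Fin n, j ≤ i → M i j = 0) : M ^ n = 0 := by
  have h := strict_pow_zero M.transpose (fun i j hij => hM j i hij)
  rw [← Matrix.transpose_pow] at h
  calc M ^ n = ((M ^ n).transpose).transpose := by rw [Matrix.transpose_transpose]
  _ = 0 := by rw [h]; simp

lemma upper_mul {n : ℕ} (A B : Matrix (Fin n) (Fin n) ℂ)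
    (hA : IsUpperUnitriangular A) (hB : IsUpperUnitriangular B) :
    IsUpperUnitriangular (A * B) := by
  constructor
  · intro i
    rw [Matrix.mul_apply, Finset.sum_eq_single i]
    · rw [hA.1, hB.1, one_mul]
    · intro l _ hl
      rcases lt_or_gt_of_ne hl with h | h
      · rw [hA.2 i l h, zero_mul]
      · rw [hB.2 l i h, mul_zero]
    · simp
  · intro i j hji
    rw [Matrix.mul_apply]
    apply Finset.sum_eq_zero
    intro l _
    by_cases hl : l < i
    · rw [hA.2 i l hl, zero_mul]
    · have : j < l := lt_of_lt_of_le hji (not_lt.mp hl)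
      rw [hB.2 l j this, mul_zero]

lemma upper_det_one {n : ℕ} (A : Matrix (Fin n) (Fin n) ℂ) (hA : IsUpperUnitriangular A) :
    A.det = 1 := by
  have hbt : A.BlockTriangular id := fun i j h => hA.2 i j h
  rw [Matrix.det_of_upperTriangular hbt]
  simp [hA.1]

lemma cont_aeval {Y : Type*} [TopologicalSpace Y] {n : ℕ} (p : Polynomial ℂ)
    (f : Y → Matrix (Fin n) (Fin n) ℂ) (hf : Continuous f) :
    Continuous fun y => Polynomial.aeval (f y) p := by
  have : (fun y => Polynomial.aeval (f y) p)
      = fun y => ∑ i ∈ Finset.range (p.natDegree + 1), p.coeff i • (f y) ^ i := by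
    funext y
    rw [Polynomial.aeval_eq_sum_range]
  rw [this]
  apply continuous_finset_sum
  intro i _
  exact (hf.pow i).const_smul (p.coeff i)

/-- Strictly lower part of a lower unitriangular matrix. -/
lemma lower_sub_one {n : ℕ} (M : Matrix (Fin n) (Fin n) ℂ) (hM : IsLowerUnitriangular M) :
    ∀ i j : Fin n, i ≤ j → (M - 1) i j = 0 := by
  intro i j hij
  rcases eq_or_lt_of_le hij with h | h
  · subst h
    simp [Matrix.sub_apply, hM.1, Matrix.one_apply_eq]
  · simp [Matrix.sub_apply, hM.2 i j h, Matrix.one_apply_ne (ne_of_lt h)]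

lemma upper_sub_one {n : ℕ} (M : Matrix (Fin n) (Fin n) ℂ) (hM : IsUpperUnitriangular M) :
    ∀ i j : Fin n, j ≤ i → (M - 1) i j = 0 := by
  intro i j hij
  rcases eq_or_lt_of_le hij with h | h
  · subst h
    simp [Matrix.sub_apply, hM.1, Matrix.one_apply_eq]
  · simp [Matrix.sub_apply, hM.2 i j h, Matrix.one_apply_ne (ne_of_lt h).symm]

/-- A continuous product of three alternately upper/lower unitriangular matrix-valued maps
is a product of two exponentials of continuous nilpotent-valued maps. -/
theorem stmt8 {Y : Type*} [TopologicalSpace Y] (n : ℕ) (hn : 1 ≤ n)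
    (U₁ U₂ U₃ : Y → Matrix (Fin n) (Fin n) ℂ)
    (hc₁ : Continuous U₁) (hc₂ : Continuous U₂) (hc₃ : Continuous U₃)
    (hu₁ : ∀ y, IsUpperUnitriangular (U₁ y))
    (hu₂ : ∀ y, IsLowerUnitriangular (U₂ y))
    (hu₃ : ∀ y, IsUpperUnitriangular (U₃ y)) :
    ∃ A B : Y → Matrix (Fin n) (Fin n) ℂ,
      Continuous A ∧ Continuous B ∧
      (∀ y, IsNilpotent (A y)) ∧ (∀ y, IsNilpotent (B y)) ∧
      (∀ y, U₁ y * U₂ y * U₃ y = NormedSpace.exp (A y) * NormedSpace.exp (B y)) := by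
  -- the inverse of U₁ y is its adjugate
  have hdet : ∀ y, (U₁ y).det = 1 := fun y => upper_det_one _ (hu₁ y)
  have hmulinv : ∀ y, U₁ y * (U₁ y).adjugate = 1 := by
    intro y
    rw [Matrix.mul_adjugate, hdet, one_smul]
  have hinvmul : ∀ y, (U₁ y).adjugate * U₁ y = 1 := by
    intro y
    rw [Matrix.adjugate_mul, hdet, one_smul]
  -- nilpotency of relevant differences
  have hx₂ : ∀ y, (U₂ y - 1) ^ n = 0 := fun y =>
    strict_pow_zero _ (lower_sub_one _ (hu₂ y))
  have hx₁₃ : ∀ y, (U₁ y * U₃ y - 1) ^ n = 0 := fun y =>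
    strict_upper_pow_zero _ (upper_sub_one _ (upper_mul _ _ (hu₁ y) (hu₃ y)))
  refine ⟨fun y => U₁ y * Polynomial.aeval (U₂ y - 1) (Lp n) * (U₁ y).adjugate,
    fun y => Polynomial.aeval (U₁ y * U₃ y - 1) (Lp n), ?_, ?_, ?_, ?_, ?_⟩
  · exact (hc₁.matrix_mul (cont_aeval _ _ (hc₂.sub continuous_const))).matrix_mul
      hc₁.matrix_adjugate
  · exact cont_aeval _ _ ((hc₁.matrix_mul hc₃).sub continuous_const)
  · intro y
    refine ⟨n, ?_⟩
    show (U₁ y * Polynomial.aeval (U₂ y - 1) (Lp n) * (U₁ y).adjugate) ^ n = 0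
    set u : (Matrix (Fin n) (Fin n) ℂ)ˣ :=
      ⟨U₁ y, (U₁ y).adjugate, hmulinv y, hinvmul y⟩ with hu
    have hcoe : (↑u⁻¹ : Matrix (Fin n) (Fin n) ℂ) = (U₁ y).adjugate := rfl
    have h1 : U₁ y * Polynomial.aeval (U₂ y - 1) (Lp n) * (U₁ y).adjugate
        = (u : Matrix (Fin n) (Fin n) ℂ) * Polynomial.aeval (U₂ y - 1) (Lp n) *
          ((u⁻¹ : (Matrix (Fin n) (Fin n) ℂ)ˣ) : Matrix (Fin n) (Fin n) ℂ) := rfl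
    rw [h1, Units.conj_pow, Lp_nilpotent n _ (hx₂ y)]
    simp
  · intro y
    exact ⟨n, Lp_nilpotent n _ (hx₁₃ y)⟩
  · intro y
    show U₁ y * U₂ y * U₃ y
        = NormedSpace.exp (U₁ y * Polynomial.aeval (U₂ y - 1) (Lp n) * (U₁ y).adjugate) *
          NormedSpace.exp (Polynomial.aeval (U₁ y * U₃ y - 1) (Lp n))
    set u : (Matrix (Fin n) (Fin n) ℂ)ˣ :=
      ⟨U₁ y, (U₁ y).adjugate, hmulinv y, hinvmul y⟩ with hu
    have hcoe : (↑u⁻¹ : Matrix (Fin n) (Fin n) ℂ) = (U₁ y).adjugate := rfl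
    have h1 : U₁ y * Polynomial.aeval (U₂ y - 1) (Lp n) * (U₁ y).adjugate
        = (u : Matrix (Fin n) (Fin n) ℂ) * Polynomial.aeval (U₂ y - 1) (Lp n) *
          ((u⁻¹ : (Matrix (Fin n) (Fin n) ℂ)ˣ) : Matrix (Fin n) (Fin n) ℂ) := rfl
    rw [h1, Matrix.exp_units_conj u, exp_aeval_Lp n _ (hx₂ y),
      exp_aeval_Lp n _ (hx₁₃ y)]
    have h2 : (1 : Matrix (Fin n) (Fin n) ℂ) + (U₂ y - 1) = U₂ y := by abel
    have h3 : (1 : Matrix (Fin n) (Fin n) ℂ) + (U₁ y * U₃ y - 1) = U₁ y * U₃ y := by abel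
    rw [h2, h3]
    show U₁ y * U₂ y * U₃ y = U₁ y * U₂ y * (U₁ y).adjugate * (U₁ y * U₃ y)
    rw [mul_assoc (U₁ y * U₂ y), ← mul_assoc ((U₁ y).adjugate), hinvmul, one_mul]
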